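/- For every integer k ≥ 3 and all integers p ≥ 1, q ≥ 0 with 1 + p + q = k, if p·2^(p-1)·3^q = 4·3^(k-3), then p = 2 or p = 3. In other words, the maximum of p·2^(p-1)·3^q over such pairs is attained only for p ∈ {2, 3}. -/

import Mathlib

lemma aux_p23 : ∀ p, 4 ≤ p → p * 2 ^ (p - 1) < 4 * 3 ^ (p - 2) := by
  intro p hp
  induction p, hp using Nat.le_induction with
  | base => norm_num
  | succ n hn ih =>
    have h1 : n - 1 = (n - 2) + 1 := by omega
    have h2 : n + 1 - 1 = (n - 2) + 2 := by omega
    have h3 : n + 1 - 2 = (n - 2) + 1 := by omega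
    rw [h1] at ih
    rw [h2, h3]
    have hpow : 0 < 3 ^ (n - 2) := pow_pos (by norm_num) _
    ring_nf
    ring_nf at ih
    nlinarith [ih, hpow, hn]

/-- For every integer `k ≥ 3` and `p ≥ 1`, `q ≥ 0` with `1 + p + q = k`, if
`p * 2^(p-1) * 3^q = 4 * 3^(k-3)`, then `p = 2` or `p = 3`. -/
theorem max_attained_only_at_p_two_or_three (k : ℕ) (hk : 3 ≤ k) (p q : ℕ)
    (hp : 1 ≤ p) (hpq : 1 + p + q = k)
    (h : p * 2 ^ (p - 1) * 3 ^ q = 4 * 3 ^ (k - 3)) :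
    p = 2 ∨ p = 3 := by
  rcases le_or_gt p 3 with h3 | h4
  · interval_cases p
    · -- p = 1: 3^q = 4·3^(q-1), q ≥ 1
      exfalso
      have hq : 1 ≤ q := by omega
      have hk3 : k - 3 = q - 1 := by omega
      have hq1 : q = (q - 1) + 1 := by omega
      rw [hk3, hq1] at h
      have hpow : 0 < 3 ^ (q - 1) := pow_pos (by norm_num) _
      rw [pow_succ] at h
      simp at h
      omega
    · exact Or.inl rfl
    · exact Or.inr rfl
  · exfalso
    have hk3 : k - 3 = (p - 2) + q := by omega
    rw [hk3, pow_add, ← mul_assoc] at h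
    have := aux_p23 p (by omega)
    have hpow : 0 < 3 ^ q := pow_pos (by norm_num) _
    nlinarith
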